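/- Let α be a type, let f : α → α, and define the family of relations Q : ℕ → α → α → Prop by: Q 0 y z ↔ f y = z, and Q (s+1) y z ↔ ∃ v : α, ∀ a b : α, ((y = a ∧ v = b) ∨ (v = a ∧ b = z)) → Q s a b. Then for every s : ℕ and all y z : α, Q s y z holds if and only if f^[2^s] y = z (the 2^s-fold iterate of f applied to y equals z). -/
import Mathlib


/-- The family of relations from the modified Stockmeyer–Meyer construction:
`Q f 0 y z ↔ f y = z`, and `Q f (s+1) y z` uses one existential and two universal
quantifiers with equality constraints over a single occurrence of `Q f s`. -/
def stockmeyerMeyerQ {α : Type*} (f : α → α) : ℕ → α → α → Prop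
  | 0, y, z => f y = z
  | s + 1, y, z =>
      ∃ v : α, ∀ a b : α, ((y = a ∧ v = b) ∨ (v = a ∧ b = z)) → stockmeyerMeyerQ f s a b

theorem stockmeyerMeyerQ_iff_iterate {α : Type*} (f : α → α) (s : ℕ) (y z : α) :
    stockmeyerMeyerQ f s y z ↔ f^[2 ^ s] y = z := by
  induction s generalizing y z with
  | zero => simp [stockmeyerMeyerQ]
  | succ s ih =>
    constructor
    · rintro ⟨v, h⟩
      have h1 := (ih y v).mp (h y v (Or.inl ⟨rfl, rfl⟩))
      have h2 := (ih v z).mp (h v z (Or.inr ⟨rfl, rfl⟩))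
      rw [pow_succ, mul_two, Function.iterate_add_apply, h1, h2]
    · intro h
      refine ⟨f^[2 ^ s] y, fun a b hab => ?_⟩
      rcases hab with ⟨rfl, rfl⟩ | ⟨rfl, rfl⟩
      · exact (ih _ _).mpr rfl
      · refine (ih _ _).mpr ?_
        rw [← Function.iterate_add_apply, ← mul_two, ← pow_succ]
        exact h
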